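/- Let μ_1,…,μ_m be nonzero complex numbers with |μ_i| ≠ 1 for every i and |μ_i| > 1 for at least one i, and let k = #{i : |μ_i| > 1}. For each positive integer n define a_{1,n},…,a_{m,n} by ∏_{j=1}^m (z − μ_j^n) = z^m + a_{1,n} z^{m−1} + ⋯ + a_{m,n}. Then for every index i with 1 ≤ i ≤ m and i ≠ k, the ratio |a_{i,n}| / |a_{k,n}| tends to 0 as n → ∞. -/

import Mathlib

/-- `acoef m μ n i` is the coefficient `a_{i,n}` (for `1 ≤ i ≤ m`) defined by
`∏_{j=1}^m (z − μ_j^n) = z^m + a_{1,n} z^{m-1} + ⋯ + a_{m,n}`;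
i.e. the coefficient of `z^{m-i}` in the monic polynomial with roots `μ_1^n, …, μ_m^n`. -/
noncomputable def acoef (m : ℕ) (μ : Fin m → ℂ) (n i : ℕ) : ℂ :=
  (∏ j : Fin m, (Polynomial.X - Polynomial.C (μ j ^ n))).coeff (m - i)

open Polynomial Finset in
lemma acoef_eq (m : ℕ) (μ : Fin m → ℂ) (n i : ℕ) (him : i ≤ m) :
    acoef m μ n i = (-1) ^ i * ∑ S ∈ (Finset.univ : Finset (Fin m)).powersetCard i,
      ∏ j ∈ S, μ j ^ n := by
  have hcard : Multiset.card ((Finset.univ : Finset (Fin m)).val.map (fun j => μ j ^ n)) = m := by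
    simp
  have h1 : m - i ≤ Multiset.card ((Finset.univ : Finset (Fin m)).val.map (fun j => μ j ^ n)) := by
    rw [hcard]; omega
  have := Multiset.prod_X_sub_C_coeff _ h1
  rw [hcard, Nat.sub_sub_self him] at this
  have heq : (∏ j : Fin m, (X - C (μ j ^ n))) =
      (((Finset.univ : Finset (Fin m)).val.map (fun j => μ j ^ n)).map
        (fun t => X - C t)).prod := by
    rw [Multiset.map_map]
    rfl
  rw [acoef, heq, this, Finset.esymm_map_val]

private lemma prod_subset_le_abs {α : Type*} [DecidableEq α] {A C : Finset α} (h : A ⊆ C)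
    (f : α → ℝ) (h0 : ∀ j, 0 ≤ f j) (h1 : ∀ j ∈ C, j ∉ A → 1 ≤ f j) :
    ∏ j ∈ A, f j ≤ ∏ j ∈ C, f j := by
  rw [← Finset.prod_sdiff h]
  have hone : (1:ℝ) ≤ ∏ j ∈ C \ A, f j := by
    calc (1:ℝ) = ∏ _j ∈ C \ A, (1:ℝ) := by simp
      _ ≤ ∏ j ∈ C \ A, f j := Finset.prod_le_prod (by simp)
          (fun j hj => h1 j (Finset.mem_sdiff.mp hj).1 (Finset.mem_sdiff.mp hj).2)
  have hA : 0 ≤ ∏ j ∈ A, f j := Finset.prod_nonneg fun j _ => h0 j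
  nth_rewrite 1 [← one_mul (∏ j ∈ A, f j)]
  exact mul_le_mul_of_nonneg_right hone hA

set_option maxHeartbeats 1600000 in
theorem acoef_ratio_tendsto_zero (m : ℕ) (μ : Fin m → ℂ)
    (hμ0 : ∀ i, μ i ≠ 0) (hμ1 : ∀ i, ‖μ i‖ ≠ 1)
    (hex : ∃ i, 1 < ‖μ i‖)
    (k : ℕ) (hk : k = (Finset.univ.filter fun i => 1 < ‖μ i‖).card) :
    ∀ i : ℕ, 1 ≤ i → i ≤ m → i ≠ k →
      Filter.Tendsto
        (fun n : ℕ => ‖acoef m μ n i‖ / ‖acoef m μ n k‖)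
        Filter.atTop (nhds 0) := by
  classical
  intro i hi1 him hik
  set T : Finset (Fin m) := Finset.univ.filter fun j => 1 < ‖μ j‖ with hT
  set p : Finset (Fin m) → ℝ := fun S => ∏ j ∈ S, ‖μ j‖ with hp
  have hppos : ∀ S, 0 < p S := fun S =>
    Finset.prod_pos fun j _ => norm_pos_iff.mpr (hμ0 j)
  set B : ℝ := p T with hB
  have hTne : T.Nonempty := by
    obtain ⟨j, hj⟩ := hex
    exact ⟨j, by simp [hT, hj]⟩
  have hB1 : 1 < B := by
    have := Finset.prod_lt_prod_of_nonempty (f := fun _ : Fin m => (1:ℝ))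
      (g := fun j => ‖μ j‖) (fun _ _ => one_pos)
      (fun j hj => by simpa [hT] using hj) hTne
    simpa using this
  have hBpos : 0 < B := lt_trans one_pos hB1
  -- key: any S ≠ T has p S < B
  have hlt : ∀ S : Finset (Fin m), S ≠ T → p S < B := by
    intro S hS
    have hsmall : ∀ j : Fin m, j ∉ T → ‖μ j‖ < 1 := by
      intro j hj
      rcases lt_trichotomy (‖μ j‖) 1 with h | h | h
      · exact h
      · exact absurd h (hμ1 j)
      · exact absurd (by simp [hT, h]) hj
    have hsplit : p S = p (S ∩ T) * p (S \ T) := by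
      simp only [hp]
      exact (Finset.prod_inter_mul_prod_diff S T _).symm
    have hIT : p (S ∩ T) ≤ B := by
      simp only [hp, hB]
      apply prod_subset_le_abs Finset.inter_subset_right
      · intro j; exact norm_nonneg _
      · intro j hj _
        exact le_of_lt (by simpa [hT] using hj)
    have hSd : p (S \ T) ≤ 1 := by
      simp only [hp]
      apply Finset.prod_le_one
      · intro j _; exact norm_nonneg _
      · intro j hj; exact le_of_lt (hsmall j (Finset.mem_sdiff.mp hj).2)
    by_cases hsub : S ⊆ T
    · -- then S ⊊ T, strict
      have hss : S ⊂ T := ssubset_of_subset_of_ne hsub hS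
      obtain ⟨j, hjT, hjS⟩ := Finset.exists_of_ssubset hss
      calc p S ≤ p (T.erase j) := by
              simp only [hp]
              apply prod_subset_le_abs (fun a ha =>
                Finset.mem_erase.mpr ⟨fun h => hjS (by rw [← h]; exact ha), hsub ha⟩)
              · intro a; exact norm_nonneg _
              · intro a haT _
                exact le_of_lt (by simpa [hT] using (Finset.mem_of_mem_erase haT))
        _ < B := by
              simp only [hp, hB]
              rw [← Finset.prod_erase_mul T _ hjT]
              nth_rewrite 1 [← mul_one (∏ x ∈ T.erase j, ‖μ x‖)]
              apply mul_lt_mul_of_pos_left _ (hppos (T.erase j))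
              simpa [hT] using hjT
    · obtain ⟨j, hjS, hjT⟩ := Finset.not_subset.mp hsub
      have hSdne : (S \ T).Nonempty := ⟨j, Finset.mem_sdiff.mpr ⟨hjS, hjT⟩⟩
      have hSdlt : p (S \ T) < 1 := by
        calc p (S \ T) ≤ ‖μ j‖ *
                ∏ x ∈ (S \ T).erase j, ‖μ x‖ := by
              simp only [hp]
              rw [← Finset.mul_prod_erase _ _ (Finset.mem_sdiff.mpr ⟨hjS, hjT⟩)]
          _ ≤ ‖μ j‖ * 1 := by
              apply mul_le_mul_of_nonneg_left _ (norm_nonneg _)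
              apply Finset.prod_le_one
              · intro a _; exact norm_nonneg _
              · intro a ha
                exact le_of_lt (hsmall a (Finset.mem_sdiff.mp (Finset.mem_of_mem_erase ha)).2)
          _ < 1 := by rw [mul_one]; exact hsmall j hjT
      calc p S = p (S ∩ T) * p (S \ T) := hsplit
        _ < p (S ∩ T) * 1 := mul_lt_mul_of_pos_left hSdlt (hppos _)
        _ = p (S ∩ T) := mul_one _
        _ ≤ B := hIT
  -- abs of terms
  have habsprod : ∀ (n : ℕ) (S : Finset (Fin m)),
      ‖∏ j ∈ S, μ j ^ n‖ = (p S) ^ n := by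
    intro n S
    simp only [hp]
    rw [norm_prod, ← Finset.prod_pow]
    exact Finset.prod_congr rfl fun j _ => norm_pow _ _
  have hTcard : T.card = k := hk.symm
  have hTmem : T ∈ (Finset.univ : Finset (Fin m)).powersetCard k :=
    Finset.mem_powersetCard.mpr ⟨Finset.subset_univ _, hTcard⟩
  have hkm : k ≤ m := by
    rw [← hTcard]
    simpa using Finset.card_le_univ T
  -- upper bound for numerator abs
  set 𝒮i := (Finset.univ : Finset (Fin m)).powersetCard i with h𝒮i
  set 𝒮k := ((Finset.univ : Finset (Fin m)).powersetCard k).erase T with h𝒮k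
  have hnum : ∀ n, ‖acoef m μ n i‖ ≤ ∑ S ∈ 𝒮i, (p S) ^ n := by
    intro n
    rw [acoef_eq m μ n i him, norm_mul, norm_pow, norm_neg, norm_one, one_pow, one_mul]
    calc ‖∑ S ∈ 𝒮i, ∏ j ∈ S, μ j ^ n‖
        ≤ ∑ S ∈ 𝒮i, ‖∏ j ∈ S, μ j ^ n‖ := norm_sum_le _ _
      _ = ∑ S ∈ 𝒮i, (p S) ^ n := Finset.sum_congr rfl fun S _ => habsprod n S
  have hden : ∀ n, B ^ n - ∑ S ∈ 𝒮k, (p S) ^ n ≤ ‖acoef m μ n k‖ := by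
    intro n
    rw [acoef_eq m μ n k hkm, norm_mul, norm_pow, norm_neg, norm_one, one_pow, one_mul]
    have hsplit : ∑ S ∈ (Finset.univ : Finset (Fin m)).powersetCard k, ∏ j ∈ S, μ j ^ n
        = (∏ j ∈ T, μ j ^ n) + ∑ S ∈ 𝒮k, ∏ j ∈ S, μ j ^ n := by
      rw [h𝒮k]
      exact (Finset.add_sum_erase _ (fun S => ∏ j ∈ S, μ j ^ n) hTmem).symm
    rw [hsplit]
    have h1 : ‖∏ j ∈ T, μ j ^ n‖ -
        ‖∑ S ∈ 𝒮k, ∏ j ∈ S, μ j ^ n‖ ≤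
        ‖(∏ j ∈ T, μ j ^ n) + ∑ S ∈ 𝒮k, ∏ j ∈ S, μ j ^ n‖ := by
      have h2 := norm_add_le
        ((∏ j ∈ T, μ j ^ n) + ∑ S ∈ 𝒮k, ∏ j ∈ S, μ j ^ n)
        (-(∑ S ∈ 𝒮k, ∏ j ∈ S, μ j ^ n))
      simp only [add_neg_cancel_right, norm_neg] at h2
      linarith
    refine le_trans ?_ h1
    rw [habsprod n T]
    apply sub_le_sub_left
    calc ‖∑ S ∈ 𝒮k, ∏ j ∈ S, μ j ^ n‖
        ≤ ∑ S ∈ 𝒮k, ‖∏ j ∈ S, μ j ^ n‖ := norm_sum_le _ _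
      _ = ∑ S ∈ 𝒮k, (p S) ^ n := Finset.sum_congr rfl fun S _ => habsprod n S
  -- ratios tend to 0
  have hratio : ∀ S : Finset (Fin m), S ≠ T →
      Filter.Tendsto (fun n : ℕ => (p S / B) ^ n) Filter.atTop (nhds 0) := by
    intro S hS
    apply tendsto_pow_atTop_nhds_zero_of_lt_one
    · positivity
    · rw [div_lt_one hBpos]; exact hlt S hS
  have hsumi : Filter.Tendsto (fun n : ℕ => ∑ S ∈ 𝒮i, (p S / B) ^ n)
      Filter.atTop (nhds 0) := by
    have : Filter.Tendsto (fun n : ℕ => ∑ S ∈ 𝒮i, (p S / B) ^ n)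
        Filter.atTop (nhds (∑ S ∈ 𝒮i, (0:ℝ))) := by
      apply tendsto_finset_sum
      intro S hS
      apply hratio
      intro hST
      apply hik
      have := (Finset.mem_powersetCard.mp hS).2
      rw [hST, hTcard] at this
      omega
    simpa using this
  have hsumk : Filter.Tendsto (fun n : ℕ => ∑ S ∈ 𝒮k, (p S / B) ^ n)
      Filter.atTop (nhds 0) := by
    have : Filter.Tendsto (fun n : ℕ => ∑ S ∈ 𝒮k, (p S / B) ^ n)
        Filter.atTop (nhds (∑ S ∈ 𝒮k, (0:ℝ))) := by
      apply tendsto_finset_sum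
      intro S hS
      exact hratio S (Finset.ne_of_mem_erase hS)
    simpa using this
  -- the dominating sequence
  have hg : Filter.Tendsto
      (fun n : ℕ => (∑ S ∈ 𝒮i, (p S / B) ^ n) / (1 - ∑ S ∈ 𝒮k, (p S / B) ^ n))
      Filter.atTop (nhds 0) := by
    have := Filter.Tendsto.div hsumi (Filter.Tendsto.const_sub 1 hsumk) (by norm_num)
    simp only [sub_zero, zero_div] at this
    exact this
  -- eventually the small sum is < 1/2
  have hev : ∀ᶠ n in Filter.atTop, ∑ S ∈ 𝒮k, (p S / B) ^ n < 1/2 := by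
    have := hsumk.eventually (eventually_lt_nhds (by norm_num : (0:ℝ) < 1/2))
    exact this
  refine squeeze_zero_norm' ?_ hg
  filter_upwards [hev] with n hn
  have hBn : (0:ℝ) < B ^ n := pow_pos hBpos n
  have hden2 : B ^ n * (1 - ∑ S ∈ 𝒮k, (p S / B) ^ n) ≤ ‖acoef m μ n k‖ := by
    refine le_trans (le_of_eq ?_) (hden n)
    rw [mul_sub, mul_one, Finset.mul_sum]
    congr 1
    apply Finset.sum_congr rfl
    intro S _
    rw [div_pow, mul_div_cancel₀]
    exact ne_of_gt hBn
  have hdpos : (0:ℝ) < B ^ n * (1 - ∑ S ∈ 𝒮k, (p S / B) ^ n) := by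
    apply mul_pos hBn; linarith
  have hkpos : (0:ℝ) < ‖acoef m μ n k‖ := lt_of_lt_of_le hdpos hden2
  rw [Real.norm_eq_abs, abs_of_nonneg (div_nonneg (norm_nonneg _)
    (norm_nonneg _))]
  have s1 : ‖acoef m μ n i‖ / ‖acoef m μ n k‖
      ≤ (∑ S ∈ 𝒮i, (p S) ^ n) / ‖acoef m μ n k‖ :=
    div_le_div_of_nonneg_right (hnum n) (norm_nonneg _)
  have s2 : (∑ S ∈ 𝒮i, (p S) ^ n) / ‖acoef m μ n k‖
      ≤ (∑ S ∈ 𝒮i, (p S) ^ n) / (B ^ n * (1 - ∑ S ∈ 𝒮k, (p S / B) ^ n)) := by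
    have hN : (0:ℝ) ≤ ∑ S ∈ 𝒮i, (p S) ^ n :=
      Finset.sum_nonneg fun S _ => pow_nonneg (hppos S).le n
    rw [div_le_div_iff₀ hkpos hdpos]
    exact mul_le_mul_of_nonneg_left hden2 hN
  have s3 : (∑ S ∈ 𝒮i, (p S) ^ n) / (B ^ n * (1 - ∑ S ∈ 𝒮k, (p S / B) ^ n))
      = (∑ S ∈ 𝒮i, (p S / B) ^ n) / (1 - ∑ S ∈ 𝒮k, (p S / B) ^ n) := by
    have hsum2 : ∑ S ∈ 𝒮i, (p S / B) ^ n = (∑ S ∈ 𝒮i, (p S) ^ n) / B ^ n := by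
      rw [Finset.sum_div]
      exact Finset.sum_congr rfl fun S _ => by rw [div_pow]
    rw [hsum2, div_div]
  linarith
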